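/- For any square real matrix M, the map w ↦ S(co(M + w·U)) is constant in w; that is, S(co(M + w·U)) = S(co(M)) for all real w. -/

import Mathlib

open Matrix

noncomputable def cof {m : ℕ} (M : Matrix (Fin m) (Fin m) ℝ) : Matrix (Fin m) (Fin m) ℝ :=
  (Matrix.adjugate M)ᵀ

def entrySum {m p : ℕ} (A : Matrix (Fin m) (Fin p) ℝ) : ℝ := ∑ i, ∑ j, A i j

lemma entrySum_cof_eq (m : ℕ) (A : Matrix (Fin m) (Fin m) ℝ) :
    entrySum (cof A) = ∑ j, det (A.updateRow j (fun _ => (1 : ℝ))) := by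
  unfold entrySum cof
  refine Finset.sum_congr rfl fun j _ => ?_
  have : ∀ i, (Matrix.adjugate A)ᵀ j i = det (A.updateRow j (Pi.single i 1)) := by
    intro i
    rw [Matrix.transpose_apply, Matrix.adjugate_apply]
  simp_rw [this]
  have hlin : ∑ i, det (A.updateRow j (Pi.single i (1 : ℝ)))
      = det (A.updateRow j (∑ i, Pi.single i (1 : ℝ))) := by
    classical
    induction (Finset.univ : Finset (Fin m)) using Finset.induction_on with
    | empty =>
        simp only [Finset.sum_empty]
        have : ((0 : Fin m → ℝ)) = (0 : ℝ) • (0 : Fin m → ℝ) := by simp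
        rw [this, Matrix.det_updateRow_smul, zero_mul]
    | insert _ _ hk ih =>
        rw [Finset.sum_insert hk, Finset.sum_insert hk, Matrix.det_updateRow_add, ih]
  rw [hlin]
  congr 1
  ext k
  simp [Finset.univ_sum_single (fun _ => (1:ℝ))]

theorem entrySum_cof_add_smul_allOnes (m : ℕ) (M : Matrix (Fin m) (Fin m) ℝ) (w : ℝ) :
    entrySum (cof (M + w • (Matrix.of fun _ _ => (1 : ℝ)))) = entrySum (cof M) := by
  rw [entrySum_cof_eq, entrySum_cof_eq]
  refine Finset.sum_congr rfl fun j _ => ?_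
  refine Matrix.det_eq_of_forall_row_eq_smul_add_const
    (fun i => if i = j then 0 else w) j (by simp) ?_
  intro i k
  by_cases hij : i = j
  · subst hij
    simp
  · simp [Matrix.updateRow_ne hij, hij, Matrix.add_apply, Matrix.smul_apply, mul_comm]
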